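/- Let a < r < b be real numbers and let G : [a,b] → ℝ be continuous on [a,b] and differentiable on (a,b) with derivative g := G′ concave on (a,b) and g(r) = 0. Then for every x ∈ [a,r], G(x) ≤ G(r) − ((r−x)²/(r−a)²)·(G(r) − G(a)), and consequently ∫_a^r G(x) dx ≤ (r−a)·((2/3)·G(r) + (1/3)·G(a)). -/

import Mathlib

open MeasureTheory Set

/-- Intermediate estimate to the left of an interior minimizer: if `G` has a concave
derivative vanishing at `r`, then `G` is bounded above by a quadratic interpolation on
`[a,r]`, and its integral over `[a,r]` is at most `(r-a)((2/3)G(r) + (1/3)G(a))`. -/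
theorem concave_deriv_upper_bound_left
    (a r b : ℝ) (har : a < r) (hrb : r < b)
    (G g : ℝ → ℝ)
    (hGcont : ContinuousOn G (Icc a b))
    (hderiv : ∀ x ∈ Ioo a b, HasDerivAt G (g x) x)
    (hconc : ConcaveOn ℝ (Ioo a b) g)
    (hgr : g r = 0) :
    (∀ x ∈ Icc a r, G x ≤ G r - (r - x) ^ 2 / (r - a) ^ 2 * (G r - G a)) ∧
    ∫ x in a..r, G x ≤ (r - a) * ((2 / 3) * G r + (1 / 3) * G a) := by
  have hab : a < b := har.trans hrb
  have hra : (0:ℝ) < r - a := by linarith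
  have hgc : ContinuousOn g (Ioo a b) := hconc.continuousOn isOpen_Ioo
  have hrmem : r ∈ Ioo a b := ⟨har, hrb⟩
  -- chord inequality for concave g with g r = 0
  have hchord : ∀ x ∈ Ioo a r, ∀ t ∈ Icc x r, g x * (r - t) / (r - x) ≤ g t := by
    intro x hx t ht
    have hxm : x ∈ Ioo a b := ⟨hx.1, hx.2.trans hrb⟩
    have hxr : (0:ℝ) < r - x := by linarith [hx.2]
    have hne : r - x ≠ 0 := ne_of_gt hxr
    have hl : (0:ℝ) ≤ (r - t) / (r - x) := div_nonneg (by linarith [ht.2]) hxr.le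
    have hm : (0:ℝ) ≤ (t - x) / (r - x) := div_nonneg (by linarith [ht.1]) hxr.le
    have hsum : (r - t) / (r - x) + (t - x) / (r - x) = 1 := by
      field_simp
      ring
    have hchord' := hconc.2 hxm hrmem hl hm hsum
    simp only [smul_eq_mul, hgr, mul_zero, add_zero] at hchord'
    have hcomb : (r - t) / (r - x) * x + (t - x) / (r - x) * r = t := by
      field_simp
      ring
    rw [hcomb] at hchord'
    calc g x * (r - t) / (r - x) = (r - t) / (r - x) * g x := by ring
    _ ≤ g t := hchord'
  -- key inequality: g x * (r - x) ≤ 2 * (G r - G x)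
  have hkey : ∀ x ∈ Ioo a r, g x * (r - x) ≤ 2 * (G r - G x) := by
    intro x hx
    have hxr : (0:ℝ) < r - x := by linarith [hx.2]
    have hsub : Icc x r ⊆ Ioo a b := fun t ht => ⟨lt_of_lt_of_le hx.1 ht.1, lt_of_le_of_lt ht.2 hrb⟩
    have hgint : IntervalIntegrable g volume x r := by
      apply ContinuousOn.intervalIntegrable
      rw [uIcc_of_le hx.2.le]
      exact hgc.mono hsub
    have hftc : ∫ t in x..r, g t = G r - G x := by
      apply intervalIntegral.integral_eq_sub_of_hasDerivAt
      · intro t ht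
        rw [uIcc_of_le hx.2.le] at ht
        exact hderiv t (hsub ht)
      · exact hgint
    have hlin : IntervalIntegrable (fun t => g x * (r - t) / (r - x)) volume x r := by
      apply Continuous.intervalIntegrable
      have : Continuous fun t : ℝ => r - t := continuous_const.sub continuous_id
      exact ((continuous_const.mul this).div_const _)
    have hmono : ∫ t in x..r, g x * (r - t) / (r - x) ≤ ∫ t in x..r, g t :=
      intervalIntegral.integral_mono_on hx.2.le hlin hgint (hchord x hx)
    have hcalc : ∫ t in x..r, g x * (r - t) / (r - x) = g x * (r - x) / 2 := by
      have h1 : ∀ t : ℝ, g x * (r - t) / (r - x) = (r - t) * (g x / (r - x)) := by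
        intro t; ring
      simp_rw [h1]
      rw [intervalIntegral.integral_mul_const]
      have h2 : (∫ t in x..r, (r - t)) = (r - x) ^ 2 / 2 := by
        have h3 := intervalIntegral.integral_comp_sub_left (a := x) (b := r) (fun u => u) r
        simp only [sub_self] at h3
        rw [h3, integral_id]
        ring
      rw [h2]
      field_simp
    rw [hcalc, hftc] at hmono
    linarith
  -- main pointwise bound
  have hmain : ∀ x ∈ Icc a r, G x ≤ G r - (r - x) ^ 2 / (r - a) ^ 2 * (G r - G a) := by
    intro x hx
    rcases eq_or_lt_of_le hx.1 with heq | hax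
    · rw [← heq]
      have h1 : (r - a) ^ 2 / (r - a) ^ 2 = 1 := div_self (pow_ne_zero 2 hra.ne')
      rw [h1]; linarith
    rcases eq_or_lt_of_le hx.2 with heq | hxr
    · rw [heq]
      simp
    -- now a < x < r
    have hxIoo : x ∈ Ioo a r := ⟨hax, hxr⟩
    set Q : ℝ → ℝ := fun y => (G r - G y) / (r - y) ^ 2 with hQdef
    have hQderiv : ∀ y ∈ Ioo a x, HasDerivAt Q
        (((-g y) * (r - y) ^ 2 - (G r - G y) * ((2:ℕ) * (r - y) ^ 1 * (-1))) / ((r - y) ^ 2) ^ 2) y := by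
      intro y hy
      have hyr : (0:ℝ) < r - y := by linarith [hy.2, hxr]
      have hnum : HasDerivAt (fun y => G r - G y) (-g y) y := by
        exact ((hasDerivAt_const y (G r)).sub (hderiv y ⟨hy.1, by linarith [hy.2, hxr]⟩)).congr_deriv (by ring)
      have hden : HasDerivAt (fun y => (r - y) ^ 2) ((2:ℕ) * (r - y) ^ 1 * (-1)) y :=
        ((hasDerivAt_id y).const_sub r).pow 2
      exact hnum.div hden (by positivity)
    have hQmono : MonotoneOn Q (Icc a x) := by
      apply monotoneOn_of_deriv_nonneg (convex_Icc a x)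
      · apply ContinuousOn.div
        · exact continuousOn_const.sub (hGcont.mono
            (Icc_subset_Icc le_rfl (by linarith [hxr] : x ≤ b)))
        · exact ((continuous_const.sub continuous_id).pow 2).continuousOn
        · intro y hy
          have hyr : (0:ℝ) < r - y := by linarith [hy.2, hxr]
          positivity
      · intro y hy
        rw [interior_Icc] at hy
        exact ((hQderiv y hy).differentiableAt).differentiableWithinAt
      · intro y hy
        rw [interior_Icc] at hy
        rw [(hQderiv y hy).deriv]
        have hyIoo : y ∈ Ioo a r := ⟨hy.1, hy.2.trans hxr⟩
        have h1 := hkey y hyIoo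
        have hyr : (0:ℝ) < r - y := by linarith [hyIoo.2]
        apply div_nonneg _ (by positivity)
        push_cast
        nlinarith [mul_nonneg hyr.le (sub_nonneg.2 h1)]
    have hQ := hQmono (left_mem_Icc.2 hax.le) (right_mem_Icc.2 hax.le) hax.le
    have hrx : (0:ℝ) < r - x := by linarith
    rw [hQdef] at hQ
    simp only at hQ
    rw [div_le_div_iff₀ (by positivity) (by positivity)] at hQ
    have h2 : (r - x) ^ 2 / (r - a) ^ 2 * (G r - G a) ≤ G r - G x := by
      rw [div_mul_eq_mul_div, div_le_iff₀ (by positivity : (0:ℝ) < (r - a) ^ 2)]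
      nlinarith
    linarith
  refine ⟨hmain, ?_⟩
  -- integral part
  have hGint : IntervalIntegrable G volume a r := by
    apply ContinuousOn.intervalIntegrable
    rw [uIcc_of_le har.le]
    exact hGcont.mono (Icc_subset_Icc le_rfl hrb.le)
  have hRcont : Continuous (fun x : ℝ => G r - (r - x) ^ 2 / (r - a) ^ 2 * (G r - G a)) :=
    continuous_const.sub ((((continuous_const.sub continuous_id).pow 2).div_const _).mul
      continuous_const)
  have hRint : IntervalIntegrable (fun x => G r - (r - x) ^ 2 / (r - a) ^ 2 * (G r - G a))
      volume a r := hRcont.intervalIntegrable a r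
  have hle : ∫ x in a..r, G x ≤ ∫ x in a..r, (G r - (r - x) ^ 2 / (r - a) ^ 2 * (G r - G a)) :=
    intervalIntegral.integral_mono_on har.le hGint hRint hmain
  have hpoly : (∫ x in a..r, (r - x) ^ 2) = (r - a) ^ 3 / 3 := by
    have h3 := intervalIntegral.integral_comp_sub_left (a := a) (b := r) (fun u => u ^ 2) r
    simp only [sub_self] at h3
    rw [h3, integral_pow]
    norm_num
  have hcalc : ∫ x in a..r, (G r - (r - x) ^ 2 / (r - a) ^ 2 * (G r - G a))
      = (r - a) * ((2 / 3) * G r + (1 / 3) * G a) := by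
    have h1 : ∀ x : ℝ, G r - (r - x) ^ 2 / (r - a) ^ 2 * (G r - G a)
        = G r - (r - x) ^ 2 * ((G r - G a) / (r - a) ^ 2) := by intro x; ring
    simp_rw [h1]
    have hc2 : Continuous fun x : ℝ => (r - x) ^ 2 * ((G r - G a) / (r - a) ^ 2) := by
      fun_prop
    rw [intervalIntegral.integral_sub intervalIntegrable_const (hc2.intervalIntegrable a r),
      intervalIntegral.integral_const, intervalIntegral.integral_mul_const, hpoly]
    have hne : (r - a) ≠ 0 := ne_of_gt hra
    simp only [smul_eq_mul]
    field_simp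
    ring
  rw [hcalc] at hle
  exact hle
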